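/- arXiv:math/0202298 — 2 statements merged into one kernel-verified Lean document; each statement's English description precedes it below -/
import Mathlib

section
/- For any real h > 0, real b ≥ 0, and real θ, the imaginary part of e^{(y+iθ)b}·Erfc((y+iθ)/√(2h) + (b/2)√(2h)), as a function of y > 0, decays to 0 of square-exponential order; more precisely there exist constants C, c > 0 such that |e^{(y+iθ)b}·Erfc((y+iθ)/√(2h) + (b/2)√(2h))| ≤ C·exp(-c y²) for all y ≥ 1. -/
open Real MeasureTheory Set Filter Complex Topology

/-- The complementary error function, extended to the complex plane as the entire function
`Erfc(z) = 1 - (2/√π) Σ_{n≥0} (-1)^n z^{2n+1}/(n!(2n+1))`. -/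
noncomputable def erfc (z : ℂ) : ℂ :=
  1 - (2 / Real.sqrt π : ℂ) *
    ∑' n : ℕ, (-1 : ℂ) ^ n * z ^ (2 * n + 1) / ((n.factorial : ℂ) * (2 * n + 1))

lemma re_neg_sq_add (u : ℝ) (v : ℂ) : (-(((u:ℂ)+v)^2)).re = v.im^2 - (u+v.re)^2 := by
  simp [pow_two, Complex.mul_re]

lemma norm_cexp_shift (u : ℝ) (v : ℂ) :
    ‖Complex.exp (-(((u:ℂ)+v)^2))‖ = Real.exp (v.im^2 - (u+v.re)^2) := by
  rw [Complex.norm_exp, re_neg_sq_add]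

lemma gauss_aux : Integrable (fun u : ℝ => Real.exp (-u^2)) := by
  simpa using integrable_exp_neg_mul_sq (b := 1) one_pos

lemma gauss_aux' : Integrable (fun u : ℝ => u * Real.exp (-u^2)) := by
  simpa using integrable_mul_exp_neg_mul_sq (b := 1) one_pos

lemma integrableOn_cexp_shift (v : ℂ) (hv : 0 ≤ v.re) :
    IntegrableOn (fun u : ℝ => Complex.exp (-(((u:ℂ)+v)^2))) (Ioi 0) := by
  apply Integrable.mono' (g := fun u : ℝ => Real.exp (v.im^2) * Real.exp (-u^2))
  · exact ((gauss_aux.const_mul _).restrict)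
  · apply Continuous.aestronglyMeasurable
    continuity
  · filter_upwards [ae_restrict_mem measurableSet_Ioi] with u hu
    simp only [mem_Ioi] at hu
    rw [norm_cexp_shift, sub_eq_add_neg, Real.exp_add]
    gcongr <;> linarith

lemma integrableOn_deriv_shift (v : ℂ) (hv : 0 ≤ v.re) :
    IntegrableOn (fun u : ℝ => 2 * ((u:ℂ)+v) * Complex.exp (-(((u:ℂ)+v)^2))) (Ioi 0) := by
  apply Integrable.mono'
    (g := fun u : ℝ => Real.exp (v.im^2) * (2 * ‖v‖ * Real.exp (-u^2) + 2 * (u * Real.exp (-u^2))))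
  · exact ((((gauss_aux.const_mul _).add (gauss_aux'.const_mul _)).const_mul _).restrict)
  · apply Continuous.aestronglyMeasurable
    continuity
  · filter_upwards [ae_restrict_mem measurableSet_Ioi] with u hu
    simp only [mem_Ioi] at hu
    rw [norm_mul, norm_cexp_shift]
    have h1 : ‖2 * ((u:ℂ)+v)‖ ≤ 2 * (‖v‖ + u) := by
      rw [norm_mul]
      simp only [Complex.norm_ofNat]
      have := norm_add_le ((u:ℂ)) v
      have hu' : ‖(u:ℂ)‖ = u := by
        rw [Complex.norm_real, Real.norm_of_nonneg hu.le]
      nlinarith [norm_nonneg v]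
    have h2 : Real.exp (v.im^2 - (u+v.re)^2) ≤ Real.exp (v.im^2) * Real.exp (-u^2) := by
      rw [sub_eq_add_neg, Real.exp_add]
      gcongr <;> linarith
    calc ‖2 * ((u:ℂ)+v)‖ * Real.exp (v.im^2 - (u+v.re)^2)
        ≤ (2 * (‖v‖ + u)) * (Real.exp (v.im^2) * Real.exp (-u^2)) := by
          apply mul_le_mul h1 h2 (Real.exp_pos _).le
          nlinarith [norm_nonneg v, hu.le]
      _ = Real.exp (v.im^2) * (2 * ‖v‖ * Real.exp (-u^2) + 2 * (u * Real.exp (-u^2))) := by ring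

lemma hasDerivAt_aux (v z : ℂ) :
    HasDerivAt (fun z : ℂ => -Complex.exp (-((z+v)^2)))
      (2 * (z+v) * Complex.exp (-((z+v)^2))) z := by
  have h : HasDerivAt (fun z : ℂ => -((z+v)^2)) (-(2*(z+v))) z := by
    have := (((hasDerivAt_id z).add_const v).fun_pow 2).fun_neg
    simpa using this
  have := h.cexp.fun_neg
  simpa [mul_comm] using this

lemma integral_Ioi_deriv (v : ℂ) (hv : 0 ≤ v.re) :
    ∫ u in Ioi (0:ℝ), 2 * ((u:ℂ)+v) * Complex.exp (-(((u:ℂ)+v)^2))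
      = Complex.exp (-(v^2)) := by
  have B : Tendsto (fun u : ℝ => -Complex.exp (-(((u:ℂ)+v)^2))) atTop (𝓝 0) := by
    rw [← neg_zero]
    apply Tendsto.neg
    rw [tendsto_zero_iff_norm_tendsto_zero]
    simp_rw [norm_cexp_shift]
    apply Real.tendsto_exp_atBot.comp
    have h1 : Tendsto (fun u : ℝ => (u+v.re)^2) atTop atTop :=
      (tendsto_pow_atTop two_ne_zero).comp (tendsto_atTop_add_const_right atTop v.re tendsto_id)
    simp_rw [sub_eq_add_neg]
    exact tendsto_atBot_add_const_left _ _ (tendsto_neg_atBot_iff.mpr h1)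
  have := integral_Ioi_of_hasDerivAt_of_tendsto' (a := 0)
    (f := fun u : ℝ => -Complex.exp (-(((u:ℂ)+v)^2)))
    (fun x _ => (hasDerivAt_aux v x).comp_ofReal)
    (integrableOn_deriv_shift v hv) B
  simpa using this

lemma hasDerivAt_aux2 (u : ℝ) (w z : ℂ) :
    HasDerivAt (fun z : ℂ => Complex.exp (-(((u:ℂ)+z*w)^2)))
      (-(2 * w * ((u:ℂ)+z*w)) * Complex.exp (-(((u:ℂ)+z*w)^2))) z := by
  have h : HasDerivAt (fun z : ℂ => -(((u:ℂ)+z*w)^2)) (-(2 * w * ((u:ℂ)+z*w))) z := by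
    have := ((((hasDerivAt_id z).mul_const w).const_add (u:ℂ)).fun_pow 2).fun_neg
    refine this.congr_deriv ?_
    simp
    ring
  have := h.cexp
  simpa [mul_comm] using this

lemma interval_deriv (w : ℂ) (u : ℝ) :
    ∫ x in Ioc (0:ℝ) 1, -(2 * w * ((u:ℂ)+(x:ℂ)*w)) * Complex.exp (-(((u:ℂ)+(x:ℂ)*w)^2))
      = Complex.exp (-(((u:ℂ)+w)^2)) - Complex.exp (-((u:ℂ)^2)) := by
  rw [← intervalIntegral.integral_of_le zero_le_one]
  have h := intervalIntegral.integral_eq_sub_of_hasDerivAt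
    (f := fun x : ℝ => Complex.exp (-(((u:ℂ)+(x:ℂ)*w)^2)))
    (f' := fun x : ℝ => -(2 * w * ((u:ℂ)+(x:ℂ)*w)) * Complex.exp (-(((u:ℂ)+(x:ℂ)*w)^2)))
    (a := 0) (b := 1)
    (fun x _ => (hasDerivAt_aux2 u w (x:ℂ)).comp_ofReal)
    (Continuous.intervalIntegrable (by continuity) _ _)
  simpa using h

lemma cexp_term (w : ℂ) (x : ℝ) :
    w * Complex.exp (-((x:ℂ)*w)^2)
      = ∑' n : ℕ, ((-1:ℂ)^n * w^(2*n+1) / (n.factorial : ℂ)) * (x:ℂ)^(2*n) := by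
  rw [Complex.exp_eq_exp_ℂ, NormedSpace.exp_eq_tsum_div, ← tsum_mul_left]
  congr 1 with n
  rw [neg_pow (((x:ℂ)*w)^2), ← pow_mul, mul_pow, mul_comm 2 n]
  field_simp
  ring

lemma series_eq_integral (w : ℂ) :
    (∑' n : ℕ, (-1 : ℂ) ^ n * w ^ (2 * n + 1) / ((n.factorial : ℂ) * (2 * n + 1)))
      = ∫ x in Ioc (0:ℝ) 1, w * Complex.exp (-((x:ℂ)*w)^2) := by
  have hmeas : ∀ n : ℕ, IntegrableOn
      (fun x : ℝ => ((-1:ℂ)^n * w^(2*n+1) / (n.factorial : ℂ)) * (x:ℂ)^(2*n)) (Ioc 0 1) := by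
    intro n
    apply Continuous.integrableOn_Ioc
    continuity
  have hbound : ∀ n : ℕ, ∫ x in Ioc (0:ℝ) 1,
      ‖((-1:ℂ)^n * w^(2*n+1) / (n.factorial : ℂ)) * (x:ℂ)^(2*n)‖ ≤ ‖w‖^(2*n+1) / n.factorial := by
    intro n
    have h1 : ∀ x ∈ Ioc (0:ℝ) 1,
        ‖‖((-1:ℂ)^n * w^(2*n+1) / (n.factorial : ℂ)) * (x:ℂ)^(2*n)‖‖
          ≤ ‖w‖^(2*n+1) / n.factorial := by
      intro x hx
      rw [norm_norm, norm_mul, norm_div, norm_mul, norm_pow, norm_pow, norm_pow]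
      simp only [norm_neg, norm_one, one_pow, one_mul, Complex.norm_natCast,
        Complex.norm_real]
      have hx1 : |x| ≤ 1 := abs_le.mpr ⟨by linarith [hx.1], hx.2⟩
      have : ‖(x:ℝ)‖^(2*n) ≤ 1 := pow_le_one₀ (norm_nonneg _) (by simpa using hx1)
      calc ‖w‖^(2*n+1) / (n.factorial : ℝ) * ‖(x:ℝ)‖^(2*n)
          ≤ ‖w‖^(2*n+1) / (n.factorial : ℝ) * 1 := by
            apply mul_le_mul_of_nonneg_left this
            positivity
        _ = ‖w‖^(2*n+1) / n.factorial := by ring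
    have h2 := norm_setIntegral_le_of_norm_le_const (μ := volume) (s := Ioc (0:ℝ) 1)
      (by simp) h1
    simp only [Real.volume_real_Ioc, sub_zero, zero_le_one, max_eq_left, Real.volume_Ioc, ENNReal.toReal_ofReal zero_le_one, mul_one] at h2
    calc ∫ x in Ioc (0:ℝ) 1, ‖((-1:ℂ)^n * w^(2*n+1) / (n.factorial : ℂ)) * (x:ℂ)^(2*n)‖
        ≤ ‖∫ x in Ioc (0:ℝ) 1, ‖((-1:ℂ)^n * w^(2*n+1) / (n.factorial : ℂ)) * (x:ℂ)^(2*n)‖‖ :=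
          le_abs_self _
      _ ≤ ‖w‖^(2*n+1) / n.factorial := h2
  have hsum : Summable (fun n : ℕ => ‖w‖^(2*n+1) / (n.factorial : ℝ)) := by
    have : Summable (fun n : ℕ => ‖w‖ * ((‖w‖^2)^n / (n.factorial : ℝ))) :=
      (Real.summable_pow_div_factorial (‖w‖^2)).mul_left ‖w‖
    convert this using 2 with n
    rw [pow_add, pow_mul, pow_one]
    ring
  have hswap := MeasureTheory.integral_tsum_of_summable_integral_norm hmeas
    (Summable.of_nonneg_of_le
      (fun n => integral_nonneg (fun x => norm_nonneg _)) hbound hsum)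
  simp_rw [cexp_term]
  rw [← hswap]
  congr 1 with n
  have h2n : ((2*n+1 : ℕ) : ℂ) ≠ 0 := Nat.cast_ne_zero.mpr (by omega)
  push_cast at h2n
  have hInt : ∫ x in Ioc (0:ℝ) 1, ((x:ℂ))^(2*n) = (1 / (2*(n:ℂ)+1) : ℂ) := by
    rw [← intervalIntegral.integral_of_le zero_le_one]
    have hderiv : ∀ x ∈ uIcc (0:ℝ) 1,
        HasDerivAt (fun x : ℝ => ((x:ℂ))^(2*n+1)/(2*(n:ℂ)+1)) (((x:ℂ))^(2*n)) x := by
      intro x _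
      have h := (hasDerivAt_pow (2*n+1) (x:ℂ)).div_const (2*(n:ℂ)+1)
      have h' : HasDerivAt (fun z : ℂ => z^(2*n+1)/(2*(n:ℂ)+1)) (((x:ℂ))^(2*n)) x := by
        refine h.congr_deriv ?_
        push_cast
        field_simp
      exact h'.comp_ofReal
    rw [intervalIntegral.integral_eq_sub_of_hasDerivAt hderiv
      (Continuous.intervalIntegrable (by continuity) _ _)]
    norm_num
  rw [integral_const_mul, hInt]
  have hfact : ((n.factorial : ℂ)) ≠ 0 := Nat.cast_ne_zero.mpr n.factorial_ne_zero
  field_simp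

lemma fubini_step (w : ℂ) (hw : 0 ≤ w.re) :
    ∫ u in Ioi (0:ℝ), (Complex.exp (-(((u:ℂ)+w)^2)) - Complex.exp (-((u:ℂ)^2)))
      = -(∫ x in Ioc (0:ℝ) 1, w * Complex.exp (-((x:ℂ)*w)^2)) := by
  have hInt : Integrable (Function.uncurry
      (fun (u : ℝ) (x : ℝ) => -(2 * w * ((u:ℂ)+(x:ℂ)*w)) * Complex.exp (-(((u:ℂ)+(x:ℂ)*w)^2))))
      ((volume.restrict (Ioi 0)).prod (volume.restrict (Ioc 0 1))) := by
    apply Integrable.mono' (g := fun p : ℝ × ℝ =>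
      Real.exp (w.im^2) * (2 * ‖w‖ * (‖w‖ * Real.exp (-p.1^2)) + 2 * ‖w‖ * (p.1 * Real.exp (-p.1^2))))
    · apply Integrable.const_mul
      apply Integrable.add
      · have : Integrable (fun u : ℝ => 2 * ‖w‖ * (‖w‖ * Real.exp (-u^2)))
            (volume.restrict (Ioi 0)) := (((gauss_aux.const_mul _).const_mul _)).restrict
        have h1 := this.mul_prod (integrable_const (μ := volume.restrict (Ioc (0:ℝ) 1)) (1:ℝ))
        simpa using h1
      · have : Integrable (fun u : ℝ => 2 * ‖w‖ * (u * Real.exp (-u^2)))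
            (volume.restrict (Ioi 0)) := ((gauss_aux'.const_mul _)).restrict
        have h1 := this.mul_prod (integrable_const (μ := volume.restrict (Ioc (0:ℝ) 1)) (1:ℝ))
        simpa using h1
    · apply Continuous.aestronglyMeasurable
      apply Continuous.mul
      · continuity
      · apply Complex.continuous_exp.comp
        continuity
    · rw [Measure.prod_restrict]
      filter_upwards [ae_restrict_mem ((measurableSet_Ioi).prod (measurableSet_Ioc))] with p hp
      obtain ⟨hu, hx⟩ := hp
      simp only [mem_Ioi] at hu
      simp only [mem_Ioc] at hx
      set u := p.1; set x := p.2
      have hv : ((x:ℂ)*w).re = x * w.re := by simp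
      rw [Function.uncurry]
      rw [norm_mul, norm_cexp_shift u ((x:ℂ)*w)]
      have h1 : ‖-(2 * w * ((u:ℂ)+(x:ℂ)*w))‖ ≤ 2 * ‖w‖ * (u + ‖w‖) := by
        rw [norm_neg, norm_mul, norm_mul]
        simp only [Complex.norm_ofNat]
        have h2 := norm_add_le ((u:ℂ)) ((x:ℂ)*w)
        have h3 : ‖(u:ℂ)‖ = u := by rw [Complex.norm_real, Real.norm_of_nonneg hu.le]
        have h4 : ‖(x:ℂ)*w‖ ≤ ‖w‖ := by
          rw [norm_mul, Complex.norm_real, Real.norm_of_nonneg hx.1.le]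
          nlinarith [norm_nonneg w, hx.2, hx.1.le]
        nlinarith [norm_nonneg w, norm_nonneg ((u:ℂ)+(x:ℂ)*w)]
      have h2 : Real.exp (((x:ℂ)*w).im^2 - (u+((x:ℂ)*w).re)^2)
          ≤ Real.exp (w.im^2) * Real.exp (-u^2) := by
        rw [← Real.exp_add]
        apply Real.exp_le_exp.mpr
        have him : ((x:ℂ)*w).im = x * w.im := by simp
        rw [hv, him]
        have hxw : 0 ≤ x * w.re := mul_nonneg hx.1.le hw
        have : (x*w.im)^2 ≤ w.im^2 := by
          nlinarith [mul_nonneg (mul_nonneg (sub_nonneg.mpr hx.2)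
            (by linarith [hx.1.le] : (0:ℝ) ≤ 1 + x)) (sq_nonneg w.im)]
        nlinarith [sq_nonneg (u + x*w.re)]
      calc ‖-(2 * w * ((u:ℂ)+(x:ℂ)*w))‖ * Real.exp (((x:ℂ)*w).im^2 - (u+((x:ℂ)*w).re)^2)
          ≤ (2 * ‖w‖ * (u + ‖w‖)) * (Real.exp (w.im^2) * Real.exp (-u^2)) := by
            apply mul_le_mul h1 h2 (Real.exp_pos _).le
            nlinarith [norm_nonneg w, hu.le]
        _ = Real.exp (w.im^2) * (2 * ‖w‖ * (‖w‖ * Real.exp (-u^2))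
              + 2 * ‖w‖ * (u * Real.exp (-u^2))) := by ring
  have hswap := MeasureTheory.integral_integral_swap hInt
  have lhs_eq : ∫ u in Ioi (0:ℝ), (Complex.exp (-(((u:ℂ)+w)^2)) - Complex.exp (-((u:ℂ)^2)))
      = ∫ u in Ioi (0:ℝ), ∫ x in Ioc (0:ℝ) 1,
          -(2 * w * ((u:ℂ)+(x:ℂ)*w)) * Complex.exp (-(((u:ℂ)+(x:ℂ)*w)^2)) := by
    apply setIntegral_congr_fun measurableSet_Ioi
    intro u _
    exact (interval_deriv w u).symm
  have rhs_eq : ∫ x in Ioc (0:ℝ) 1, ∫ u in Ioi (0:ℝ),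
        -(2 * w * ((u:ℂ)+(x:ℂ)*w)) * Complex.exp (-(((u:ℂ)+(x:ℂ)*w)^2))
      = ∫ x in Ioc (0:ℝ) 1, -(w * Complex.exp (-((x:ℂ)*w)^2)) := by
    apply setIntegral_congr_fun measurableSet_Ioc
    intro x hx
    beta_reduce
    have hxre : 0 ≤ ((x:ℂ)*w).re := by
      simp only [Complex.mul_re, Complex.ofReal_re, Complex.ofReal_im]
      simp
      nlinarith [hx.1.le, hw]
    have key := integral_Ioi_deriv ((x:ℂ)*w) hxre
    have : (fun u : ℝ => -(2 * w * ((u:ℂ)+(x:ℂ)*w)) * Complex.exp (-(((u:ℂ)+(x:ℂ)*w)^2)))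
        = (fun u : ℝ => (-w) * (2 * ((u:ℂ)+(x:ℂ)*w) * Complex.exp (-(((u:ℂ)+(x:ℂ)*w)^2)))) := by
      ext u; ring
    rw [this, integral_const_mul, key]
    ring_nf
  rw [lhs_eq, hswap, rhs_eq, integral_neg]

lemma gauss_Ioi_complex : ∫ u in Ioi (0:ℝ), Complex.exp (-((u:ℂ)^2))
    = ((Real.sqrt π / 2 : ℝ) : ℂ) := by
  have heq : (fun u : ℝ => Complex.exp (-((u:ℂ)^2)))
      = (fun u : ℝ => ((Real.exp (-u^2) : ℝ) : ℂ)) := by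
    ext u
    rw [Complex.ofReal_exp]
    norm_cast
  have h2 : ∫ u in Ioi (0:ℝ), ((Real.exp (-u^2) : ℝ) : ℂ)
      = (((∫ u in Ioi (0:ℝ), Real.exp (-u^2)) : ℝ) : ℂ) := integral_ofReal
  rw [heq, h2]
  have := integral_gaussian_Ioi 1
  simp only [neg_mul, one_mul] at this
  rw [this]
  norm_num

lemma erfc_eq_integral (w : ℂ) (hw : 0 ≤ w.re) :
    erfc w = (2 / Real.sqrt π : ℂ) * ∫ u in Ioi (0:ℝ), Complex.exp (-(((u:ℂ)+w)^2)) := by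
  have I1 := integrableOn_cexp_shift w hw
  have I0 : IntegrableOn (fun u : ℝ => Complex.exp (-((u:ℂ)^2))) (Ioi 0) := by
    have := integrableOn_cexp_shift 0 (by simp)
    simpa using this
  have hsplit : ∫ u in Ioi (0:ℝ), (Complex.exp (-(((u:ℂ)+w)^2)) - Complex.exp (-((u:ℂ)^2)))
      = (∫ u in Ioi (0:ℝ), Complex.exp (-(((u:ℂ)+w)^2)))
        - ∫ u in Ioi (0:ℝ), Complex.exp (-((u:ℂ)^2)) := integral_sub I1 I0
  have key : (∫ u in Ioi (0:ℝ), Complex.exp (-(((u:ℂ)+w)^2)))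
      = ((Real.sqrt π / 2 : ℝ) : ℂ)
        - (∑' n : ℕ, (-1 : ℂ) ^ n * w ^ (2 * n + 1) / ((n.factorial : ℂ) * (2 * n + 1))) := by
    have h := fubini_step w hw
    rw [hsplit, gauss_Ioi_complex, ← series_eq_integral] at h
    linear_combination h
  rw [erfc, key]
  have hpi : Real.sqrt π ≠ 0 := by
    positivity
  have hpi' : ((Real.sqrt π : ℝ) : ℂ) ≠ 0 := by exact_mod_cast hpi
  field_simp
  push_cast
  ring

lemma erfc_norm_bound (w : ℂ) (hw : 0 ≤ w.re) :
    ‖erfc w‖ ≤ Real.exp (w.im^2 - w.re^2) := by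
  rw [erfc_eq_integral w hw, norm_mul]
  have hpi : (0:ℝ) < Real.sqrt π := Real.sqrt_pos.mpr Real.pi_pos
  have hnorm2 : ‖(2 / Real.sqrt π : ℂ)‖ = 2 / Real.sqrt π := by
    rw [norm_div]
    simp [Complex.norm_real, Real.norm_of_nonneg hpi.le, abs_of_pos hpi]
  have hIntNorm : ‖∫ u in Ioi (0:ℝ), Complex.exp (-(((u:ℂ)+w)^2))‖
      ≤ Real.exp (w.im^2 - w.re^2) * (Real.sqrt π / 2) := by
    have h1 : ‖∫ u in Ioi (0:ℝ), Complex.exp (-(((u:ℂ)+w)^2))‖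
        ≤ ∫ u in Ioi (0:ℝ), ‖Complex.exp (-(((u:ℂ)+w)^2))‖ := norm_integral_le_integral_norm _
    have h2 : ∫ u in Ioi (0:ℝ), ‖Complex.exp (-(((u:ℂ)+w)^2))‖
        ≤ ∫ u in Ioi (0:ℝ), Real.exp (w.im^2 - w.re^2) * Real.exp (-u^2) := by
      apply setIntegral_mono_on
      · exact (integrableOn_cexp_shift w hw).norm
      · exact ((gauss_aux.const_mul _)).restrict
      · exact measurableSet_Ioi
      · intro u hu
        simp only [mem_Ioi] at hu
        rw [norm_cexp_shift, ← Real.exp_add]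
        apply Real.exp_le_exp.mpr
        nlinarith [hu.le, hw, mul_nonneg hu.le hw]
    have h3 : ∫ u in Ioi (0:ℝ), Real.exp (w.im^2 - w.re^2) * Real.exp (-u^2)
        = Real.exp (w.im^2 - w.re^2) * (Real.sqrt π / 2) := by
      rw [integral_const_mul]
      have := integral_gaussian_Ioi 1
      simp only [neg_mul, one_mul] at this
      rw [this]
      norm_num
    linarith
  calc ‖(2 / Real.sqrt π : ℂ)‖ * ‖∫ u in Ioi (0:ℝ), Complex.exp (-(((u:ℂ)+w)^2))‖
      ≤ (2 / Real.sqrt π) * (Real.exp (w.im^2 - w.re^2) * (Real.sqrt π / 2)) := by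
        rw [hnorm2]
        apply mul_le_mul_of_nonneg_left hIntNorm
        positivity
    _ = Real.exp (w.im^2 - w.re^2) := by
        field_simp

/-- For real `h > 0`, `b ≥ 0` and real `θ`, the function
`y ↦ e^{(y+iθ)b} Erfc((y+iθ)/√(2h) + (b/2)√(2h))` decays to `0` of square-exponential
order: there are `C, c > 0` with
`|e^{(y+iθ)b} Erfc((y+iθ)/√(2h) + (b/2)√(2h))| ≤ C exp(-c y²)` for all `y ≥ 1`. -/
theorem weighted_erfc_square_exponential_decay (h b θ : ℝ) (hh : 0 < h) (hb : 0 ≤ b) :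
    ∃ C c : ℝ, 0 < C ∧ 0 < c ∧ ∀ y : ℝ, 1 ≤ y →
      ‖Complex.exp (((y : ℂ) + Complex.I * θ) * b) *
          erfc (((y : ℂ) + Complex.I * θ) / Real.sqrt (2 * h) +
            (b / 2) * Real.sqrt (2 * h))‖ ≤ C * Real.exp (-c * y ^ 2) := by
  set s : ℝ := Real.sqrt (2 * h) with hs_def
  have hs : 0 < s := Real.sqrt_pos.mpr (by linarith)
  have hs2 : s ^ 2 = 2 * h := Real.sq_sqrt (by linarith)
  refine ⟨Real.exp (θ^2 / (2*h)), 1 / (2*h), Real.exp_pos _, by positivity, ?_⟩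
  intro y hy
  set w : ℂ := ((y : ℂ) + Complex.I * θ) / (s : ℂ) + ((b : ℂ) / 2) * (s : ℂ) with hw_def
  have hre : w.re = y / s + b / 2 * s := by
    simp [hw_def, Complex.div_ofReal_re, Complex.add_re, Complex.mul_re]
  have him : w.im = θ / s := by
    simp [hw_def, Complex.div_ofReal_im, Complex.add_im, Complex.mul_im]
  have hwre : 0 ≤ w.re := by
    rw [hre]
    have : 0 < y / s := div_pos (by linarith) hs
    nlinarith [hs.le]
  have hbound := erfc_norm_bound w hwre
  have hexp : ‖Complex.exp (((y : ℂ) + Complex.I * θ) * b)‖ = Real.exp (y * b) := by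
    rw [Complex.norm_exp]
    congr 1
    simp [Complex.add_re, Complex.mul_re]
  rw [norm_mul, hexp]
  have key : Real.exp (y * b) * Real.exp (w.im^2 - w.re^2)
      ≤ Real.exp (θ^2 / (2*h)) * Real.exp (-(1/(2*h)) * y^2) := by
    rw [← Real.exp_add, ← Real.exp_add]
    apply Real.exp_le_exp.mpr
    rw [hre, him]
    have h1 : (y / s + b / 2 * s)^2 = y^2 / s^2 + y * b + b^2 * s^2 / 4 := by
      field_simp
      ring
    have h2 : (θ / s)^2 = θ^2 / (2*h) := by
      rw [div_pow, hs2]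
    have h3 : y^2 / s^2 = y^2 / (2*h) := by rw [hs2]
    rw [h1, h2, h3]
    have h4 : 0 ≤ b^2*s^2/4 := by positivity
    have h5 : -(1/(2*h))*y^2 = -(y^2/(2*h)) := by ring
    rw [h5]
    linarith
  calc Real.exp (y * b) * ‖erfc w‖
      ≤ Real.exp (y * b) * Real.exp (w.im^2 - w.re^2) := by
        apply mul_le_mul_of_nonneg_left hbound (Real.exp_pos _).le
    _ ≤ Real.exp (θ^2 / (2*h)) * Real.exp (-(1/(2*h)) * y^2) := key
    _ = Real.exp (θ^2 / (2*h)) * Real.exp (-(1/(2*h)) * y^2) := rfl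
end

section
/- For any complex μ that is not a nonnegative integer and any complex z, the Hermite function has the absolutely convergent series H_μ(z) = (1/(2Γ(-μ)))·Σ_{n=0}^∞ ((-1)^n/n!)·Γ((n-μ)/2)·(2z)^n, and when Re(μ) < 0 this series equals (1/Γ(-μ)) ∫₀^∞ e^{-u²-2zu} u^{-(μ+1)} du. -/
open MeasureTheory Real Set Filter

namespace HermiteAux


lemma integrableOn_exp_neg_sq_cpow {w : ℂ} (hw : -1 < w.re) :
    IntegrableOn (fun u : ℝ => Complex.exp (-(u:ℂ)^2) * (u:ℂ) ^ w) (Set.Ioi 0) := by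
  have hmeas : AEStronglyMeasurable (fun u : ℝ => Complex.exp (-(u:ℂ)^2) * (u:ℂ) ^ w)
      (volume.restrict (Set.Ioi 0)) := by
    refine ContinuousOn.aestronglyMeasurable ?_ measurableSet_Ioi
    refine ((Complex.continuous_exp.comp (by continuity)).continuousOn).mul ?_
    refine continuousOn_of_forall_continuousAt (fun x hx => ?_)
    exact (continuousAt_cpow_const (Complex.ofReal_mem_slitPlane.2 hx)).comp
      Complex.continuous_ofReal.continuousAt
  refine Integrable.mono' (integrableOn_rpow_mul_exp_neg_rpow hw zero_lt_two) hmeas ?_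
  refine (ae_restrict_iff' measurableSet_Ioi).mpr ?_
  filter_upwards with x hx
  rw [norm_mul, Complex.norm_exp,
    Complex.norm_cpow_eq_rpow_re_of_pos hx]
  have : (-(x:ℂ)^2).re = -(x ^ (2:ℝ)) := by
    rw [rpow_two]; simp [← Complex.ofReal_pow]
  rw [this, mul_comm]



lemma integral_exp_neg_sq_cpow {s : ℂ} (hs : 0 < s.re) :
    ∫ u in Set.Ioi (0:ℝ), Complex.exp (-(u:ℂ)^2) * (u:ℂ) ^ (s - 1)
      = Complex.Gamma (s / 2) / 2 := by
  have hs2 : 0 < (s / 2).re := by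
    rw [Complex.div_re]; simp; positivity
  have key : (∫ x in Ioi (0:ℝ), ((2:ℝ) * x ^ ((2:ℝ) - 1)) •
      ((↑(Real.exp (-(x ^ (2:ℝ)))) : ℂ) * (↑(x ^ (2:ℝ)):ℂ) ^ (s/2 - 1)))
      = Complex.Gamma (s/2) := by
    rw [integral_comp_rpow_Ioi_of_pos (g := fun x : ℝ => (↑(Real.exp (-x)) : ℂ) * (x:ℂ) ^ (s/2 - 1))
      zero_lt_two, Complex.Gamma_eq_integral hs2, Complex.GammaIntegral]
  have ptwise : ∀ x : ℝ, x ∈ Ioi (0:ℝ) →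
      ((2:ℝ) * x ^ ((2:ℝ) - 1)) •
        ((↑(Real.exp (-(x ^ (2:ℝ)))) : ℂ) * (↑(x ^ (2:ℝ)):ℂ) ^ (s/2 - 1))
      = 2 * (Complex.exp (-(x:ℂ)^2) * (x:ℂ) ^ (s - 1)) := by
    intro x hx
    have hx0 : (0:ℝ) < x := hx
    have hxC : (x:ℂ) ≠ 0 := Complex.ofReal_ne_zero.mpr hx0.ne'
    have h21 : x ^ ((2:ℝ) - 1) = x := by norm_num
    have h22 : x ^ (2:ℝ) = x ^ 2 := by rw [rpow_two]
    have hexp : (↑(Real.exp (-(x ^ 2))) : ℂ) = Complex.exp (-(x:ℂ)^2) := by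
      rw [Complex.ofReal_exp]; push_cast; ring_nf
    have hcpow : (↑(x ^ 2):ℂ) ^ (s/2 - 1) = (x:ℂ) ^ (s - 2) := by
      have him : ((Complex.log (x:ℂ)) * (((2:ℕ):ℂ))).im = 0 := by
        rw [← Complex.ofReal_log hx0.le]
        simp [Complex.mul_im]
      rw [Complex.ofReal_pow, ← Complex.cpow_natCast (x:ℂ) 2, ← Complex.cpow_mul]
      · congr 1; push_cast; ring
      · rw [him]; simp [Real.pi_pos]
      · rw [him]; exact pi_pos.le
    have hfin : (x:ℂ) * (x:ℂ) ^ (s - 2) = (x:ℂ) ^ (s - 1) := by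
      have : s - 1 = 1 + (s - 2) := by ring
      rw [this, Complex.cpow_add _ _ hxC, Complex.cpow_one]
    rw [h21, h22, hexp, hcpow, Complex.real_smul, ← hfin]
    push_cast
    ring
  rw [setIntegral_congr_fun measurableSet_Ioi ptwise, integral_const_mul] at key
  rw [eq_div_iff (two_ne_zero' ℂ)]
  rw [← key]; ring



noncomputable def F (μ z : ℂ) (n : ℕ) : ℂ :=
  ((-1 : ℂ) ^ n / (n.factorial : ℂ)) * Complex.Gamma (((n : ℂ) - μ) / 2) * (2 * z) ^ n

lemma F_step (μ z : ℂ) (hμ : ∀ k : ℕ, μ ≠ (k : ℂ)) (n : ℕ) :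
    F μ z (n + 2) = F μ z n *
      ((((n:ℂ) - μ)/2) * (2*z)^2 / (((n:ℂ)+1) * ((n:ℂ)+2))) := by
  have h0 : ((n:ℂ) - μ)/2 ≠ 0 := by
    intro h
    apply hμ n
    have : (n:ℂ) - μ = 0 := by
      field_simp at h; simpa using h
    linear_combination -this
  have hG : Complex.Gamma ((((n:ℕ)+2 : ℕ) - μ)/2)
      = (((n:ℂ)-μ)/2) * Complex.Gamma (((n:ℂ)-μ)/2) := by
    have he : ((((n:ℕ)+2 : ℕ):ℂ) - μ)/2 = ((n:ℂ)-μ)/2 + 1 := by push_cast; ring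
    rw [he, Complex.Gamma_add_one _ h0]
  have hf : (((n+2).factorial : ℕ) : ℂ) = ((n:ℂ)+2)*((n:ℂ)+1)*(n.factorial : ℂ) := by
    rw [show n + 2 = (n+1)+1 by ring, Nat.factorial_succ, Nat.factorial_succ]
    push_cast; ring
  have h1 : ((n:ℂ)+1) ≠ 0 := by
    intro h; have := congrArg Complex.re h; simp at this; linarith [Nat.cast_nonneg (α := ℝ) n]
  have h2 : ((n:ℂ)+2) ≠ 0 := by
    intro h; have := congrArg Complex.re h; simp at this; linarith [Nat.cast_nonneg (α := ℝ) n]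
  have hfac : ((n.factorial : ℕ) : ℂ) ≠ 0 := by
    exact_mod_cast Nat.cast_ne_zero.mpr n.factorial_ne_zero
  unfold F
  rw [hG, hf]
  have hpow : ((-1:ℂ)) ^ (n+2) = (-1:ℂ)^n := by
    rw [pow_add]; norm_num
  rw [hpow, pow_add]
  field_simp

lemma summable_norm_F (μ z : ℂ) (hμ : ∀ k : ℕ, μ ≠ (k : ℂ)) :
    Summable (fun n : ℕ => ‖F μ z n‖) := by
  have key : ∀ e : ℕ, Summable (fun k : ℕ => ‖F μ z (2 * k + e)‖) := by
    intro e
    apply summable_of_ratio_norm_eventually_le (r := 1/2) (by norm_num)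
    obtain ⟨N, hN⟩ := exists_nat_ge (max ‖μ‖ (2 * ‖2*z‖^2))
    rw [Filter.eventually_atTop]
    refine ⟨N, fun k hk => ?_⟩
    set n : ℕ := 2 * k + e with hn
    have hkn : (N:ℝ) ≤ (n:ℝ) := by
      have : N ≤ n := le_trans hk (by omega)
      exact_mod_cast this
    have hstep : F μ z (2 * (k+1) + e) = F μ z n *
        ((((n:ℂ) - μ)/2) * (2*z)^2 / (((n:ℂ)+1) * ((n:ℂ)+2))) := by
      rw [show 2 * (k+1) + e = n + 2 by omega]
      exact F_step μ z hμ n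
    have hq : ‖(((n:ℂ) - μ)/2) * (2*z)^2 / (((n:ℂ)+1) * ((n:ℂ)+2))‖ ≤ 1/2 := by
      have e1 : ‖((n:ℂ)+1)‖ = (n:ℝ)+1 := by
        rw [show ((n:ℂ)+1) = (((n+1:ℕ)):ℂ) by push_cast; ring, Complex.norm_natCast]
        push_cast; ring
      have e2 : ‖((n:ℂ)+2)‖ = (n:ℝ)+2 := by
        rw [show ((n:ℂ)+2) = (((n+2:ℕ)):ℂ) by push_cast; ring, Complex.norm_natCast]
        push_cast; ring
      have hnum : ‖((n:ℂ) - μ)/2‖ ≤ (n:ℝ) + 1 := by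
        rw [norm_div]
        have : ‖(n:ℂ) - μ‖ ≤ (n:ℝ) + ‖μ‖ := by
          calc ‖(n:ℂ) - μ‖ ≤ ‖(n:ℂ)‖ + ‖μ‖ := norm_sub_le _ _
          _ = (n:ℝ) + ‖μ‖ := by rw [Complex.norm_natCast]
        have hμn : ‖μ‖ ≤ (n:ℝ) := le_trans (le_trans (le_max_left _ _) hN) hkn
        have h2 : ‖(2:ℂ)‖ = 2 := by norm_num
        rw [h2]
        nlinarith [norm_nonneg μ]
      have hz2 : ‖(2*z)^2‖ = ‖2*z‖^2 := by rw [norm_pow]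
      have hzn : 2 * ‖2*z‖^2 ≤ (n:ℝ) + 2 := by
        have := le_trans (le_trans (le_max_right _ _) hN) hkn
        linarith
      rw [norm_div, norm_mul, norm_mul, e1, e2, hz2]
      rw [div_le_iff₀ (by positivity)]
      have hn1 : (0:ℝ) < (n:ℝ)+1 := by positivity
      nlinarith [norm_nonneg ((n:ℂ) - μ), sq_nonneg ‖2*z‖, norm_nonneg μ]
    rw [norm_norm, norm_norm, hstep, norm_mul]
    calc ‖F μ z n‖ * ‖(((n:ℂ) - μ)/2) * (2*z)^2 / (((n:ℂ)+1) * ((n:ℂ)+2))‖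
        ≤ ‖F μ z n‖ * (1/2) := by
          exact mul_le_mul_of_nonneg_left hq (norm_nonneg _)
      _ = 1/2 * ‖F μ z n‖ := by ring
  have he := key 0
  have ho := key 1
  simp only [add_zero] at he
  exact Summable.even_add_odd he ho



lemma main_int (μ z : ℂ) (ha : μ.re < 0) :
    ∫ u in Set.Ioi (0:ℝ), Complex.exp (-(u:ℂ)^2 - 2*z*(u:ℂ)) * (u:ℂ)^(-(μ+1))
      = (∑' n : ℕ, F μ z n) / 2 := by
  set f : ℕ → ℝ → ℂ := fun n u =>
    ((-(2*z)*(u:ℂ))^n / (n.factorial : ℂ)) *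
      (Complex.exp (-(u:ℂ)^2) * (u:ℂ) ^ (-(μ+1))) with hf
  have hμa : ∀ k : ℕ, (μ.re : ℂ) ≠ (k : ℂ) := by
    intro k h
    have h2 := congrArg Complex.re h
    simp only [Complex.ofReal_re, Complex.natCast_re] at h2
    have h3 : (0:ℝ) ≤ (k:ℝ) := Nat.cast_nonneg k
    linarith
  -- pointwise form of f on Ioi 0
  have hfeq : ∀ n : ℕ, ∀ u ∈ Ioi (0:ℝ), f n u =
      ((-(2*z))^n / (n.factorial : ℂ)) *
        (Complex.exp (-(u:ℂ)^2) * (u:ℂ) ^ (((n:ℂ) - μ) - 1)) := by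
    intro n u hu
    have huC : (u:ℂ) ≠ 0 := Complex.ofReal_ne_zero.mpr (ne_of_gt hu)
    have hcp : (u:ℂ)^n * (u:ℂ) ^ (-(μ+1)) = (u:ℂ) ^ (((n:ℂ) - μ) - 1) := by
      rw [← Complex.cpow_natCast (u:ℂ) n, ← Complex.cpow_add _ _ huC]
      congr 1; ring
    rw [hf]; simp only
    rw [mul_pow, ← hcp]
    ring
  have hint : ∀ n : ℕ, IntegrableOn (f n) (Ioi 0) := by
    intro n
    have hw : (-1:ℝ) < (((n:ℂ) - μ) - 1).re := by
      simp only [Complex.sub_re, Complex.natCast_re, Complex.one_re]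
      have : (0:ℝ) ≤ (n:ℝ) := Nat.cast_nonneg n
      linarith
    have := (integrableOn_exp_neg_sq_cpow hw).const_mul ((-(2*z))^n / (n.factorial : ℂ))
    exact IntegrableOn.congr_fun this (fun u hu => (hfeq n u hu).symm) measurableSet_Ioi
  have hInt : ∀ n : ℕ, ∫ u in Ioi (0:ℝ), f n u = F μ z n / 2 := by
    intro n
    have hs : 0 < ((n:ℂ) - μ).re := by
      simp only [Complex.sub_re, Complex.natCast_re]
      have : (0:ℝ) ≤ (n:ℝ) := Nat.cast_nonneg n
      linarith
    rw [setIntegral_congr_fun measurableSet_Ioi (hfeq n), integral_const_mul,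
      integral_exp_neg_sq_cpow hs]
    rw [F, neg_pow]
    ring
  -- norm integrals
  have hnorm : ∀ n : ℕ, ∫ u in Ioi (0:ℝ), ‖f n u‖ =
      (1/2) * ‖F (μ.re : ℂ) ((‖z‖ : ℝ) : ℂ) n‖ := by
    intro n
    have hq : (-1:ℝ) < (n:ℝ) - μ.re - 1 := by
      have : (0:ℝ) ≤ (n:ℝ) := Nat.cast_nonneg n
      linarith
    have hptn : ∀ u ∈ Ioi (0:ℝ), ‖f n u‖ =
        ((2*‖z‖)^n / (n.factorial : ℝ)) * (u ^ ((n:ℝ) - μ.re - 1) * Real.exp (-u ^ (2:ℝ))) := by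
      intro u hu
      have hu0 : (0:ℝ) < u := hu
      rw [hf]; simp only
      rw [norm_mul, norm_div, norm_pow, norm_mul, norm_mul]
      rw [Complex.norm_exp,
        Complex.norm_cpow_eq_rpow_re_of_pos hu0]
      have h1 : ‖-(2*z)‖ = 2*‖z‖ := by
        rw [norm_neg, norm_mul]; norm_num
      have h2 : ‖(u:ℂ)‖ = u := by
        rw [Complex.norm_real, Real.norm_of_nonneg hu0.le]
      have h3 : ((-(u:ℂ)^2).re) = -u^(2:ℝ) := by
        rw [rpow_two]
        simp [← Complex.ofReal_pow]
      have h4 : ‖((n.factorial : ℂ))‖ = (n.factorial : ℝ) := by simp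
      have h5 : (-(μ+1)).re = -μ.re - 1 := by simp; ring
      rw [h1, h2, h3, h4, h5]
      have h6 : u ^ n * u ^ (-μ.re - 1) = u ^ ((n:ℝ) - μ.re - 1) := by
        rw [← rpow_natCast u n, ← rpow_add hu0]
        congr 1; ring
      rw [← h6]
      ring
    rw [setIntegral_congr_fun measurableSet_Ioi hptn, integral_const_mul]
    rw [integral_rpow_mul_exp_neg_rpow zero_lt_two hq]
    have hGpos : 0 < Real.Gamma (((n:ℝ) - μ.re)/2) := by
      apply Real.Gamma_pos_of_pos
      have : (0:ℝ) ≤ (n:ℝ) := Nat.cast_nonneg n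
      linarith
    have hnormF : ‖F (μ.re : ℂ) ((‖z‖ : ℝ) : ℂ) n‖ =
        (1 / (n.factorial : ℝ)) * Real.Gamma (((n:ℝ) - μ.re)/2) * (2*‖z‖)^n := by
      rw [F, norm_mul, norm_mul, norm_div, norm_pow, norm_pow]
      have e1 : ‖(-1:ℂ)‖ = 1 := by norm_num
      have e2 : (((n:ℕ):ℂ) - (μ.re:ℂ)) / 2 = (((n:ℝ) - μ.re)/2 : ℝ) := by push_cast; ring
      have e3 : ‖Complex.Gamma ((((n:ℕ):ℂ) - (μ.re:ℂ)) / 2)‖ = Real.Gamma (((n:ℝ) - μ.re)/2) := by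
        rw [e2, Complex.Gamma_ofReal, Complex.norm_real, Real.norm_of_nonneg hGpos.le]
      have e4 : ‖((n.factorial : ℂ))‖ = (n.factorial : ℝ) := by simp
      have e5 : ‖(2:ℂ) * ((‖z‖:ℝ):ℂ)‖ = 2*‖z‖ := by
        rw [norm_mul, Complex.norm_real, Real.norm_of_nonneg (norm_nonneg z)]; norm_num
      rw [e1, e3, e4, e5, one_pow]
    rw [hnormF]
    have : ((n:ℝ) - μ.re - 1 + 1) / 2 = ((n:ℝ) - μ.re) / 2 := by ring
    rw [this]
    ring
  have hsum' : Summable (fun n : ℕ => ∫ u in Ioi (0:ℝ), ‖f n u‖) := by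
    have := (summable_norm_F (μ.re : ℂ) ((‖z‖ : ℝ) : ℂ) hμa).mul_left (1/2)
    exact this.congr (fun n => (hnorm n).symm)
  have hmeas : ∀ n : ℕ, AEStronglyMeasurable (f n) (volume.restrict (Ioi 0)) :=
    fun n => (hint n).aestronglyMeasurable
  have hfin : ∑' n : ℕ, ∫⁻ u, ‖f n u‖₊ ∂(volume.restrict (Ioi 0)) ≠ ⊤ := by
    have heq : ∀ n : ℕ, ∫⁻ u, ‖f n u‖₊ ∂(volume.restrict (Ioi 0))
        = ENNReal.ofReal (∫ u in Ioi (0:ℝ), ‖f n u‖) := fun n =>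
      (ofReal_integral_norm_eq_lintegral_enorm (hint n)).symm
    rw [tsum_congr heq, ← ENNReal.ofReal_tsum_of_nonneg
      (fun n => integral_nonneg (fun u => norm_nonneg _)) hsum']
    exact ENNReal.ofReal_ne_top
  have hexp : ∀ w : ℂ, (∑' n : ℕ, w^n / (n.factorial : ℂ)) = Complex.exp w := by
    intro w
    rw [Complex.exp_eq_exp_ℂ, NormedSpace.exp_eq_tsum_div]
  have hpt : ∀ u ∈ Ioi (0:ℝ), Complex.exp (-(u:ℂ)^2 - 2*z*(u:ℂ)) * (u:ℂ)^(-(μ+1))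
      = ∑' n : ℕ, f n u := by
    intro u hu
    rw [hf]; simp only
    rw [tsum_mul_right, hexp (-(2*z)*(u:ℂ)),
      show -(u:ℂ)^2 - 2*z*(u:ℂ) = (-(u:ℂ)^2) + (-(2*z)*(u:ℂ)) by ring, Complex.exp_add]
    ring
  rw [setIntegral_congr_fun measurableSet_Ioi hpt, integral_tsum hmeas hfin,
    tsum_congr hInt, tsum_div_const]

end HermiteAux

open MeasureTheory Real

/-- For any complex `μ` that is not a nonnegative integer and any complex `z`, the series
`(1/(2Γ(-μ))) Σ_{n≥0} ((-1)^n/n!) Γ((n-μ)/2) (2z)^n` converges absolutely, and when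
`Re μ < 0` it equals the Hermite function
`H_μ(z) = (1/Γ(-μ)) ∫₀^∞ e^{-u²-2zu} u^{-(μ+1)} du`. -/
theorem hermiteH_series (μ : ℂ) (hμ : ∀ k : ℕ, μ ≠ (k : ℂ)) (z : ℂ) :
    Summable (fun n : ℕ =>
      ‖((-1 : ℂ) ^ n / (n.factorial : ℂ)) * Complex.Gamma (((n : ℂ) - μ) / 2) * (2 * z) ^ n‖) ∧
    (μ.re < 0 →
      (1 / (2 * Complex.Gamma (-μ))) *
          ∑' n : ℕ, ((-1 : ℂ) ^ n / (n.factorial : ℂ)) *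
            Complex.Gamma (((n : ℂ) - μ) / 2) * (2 * z) ^ n =
        (Complex.Gamma (-μ))⁻¹ *
          ∫ u in Set.Ioi (0 : ℝ),
            Complex.exp (-(u : ℂ) ^ 2 - 2 * z * u) * (u : ℂ) ^ (-(μ + 1))) := by
  refine ⟨HermiteAux.summable_norm_F μ z hμ, fun ha => ?_⟩
  have hΓ : Complex.Gamma (-μ) ≠ 0 := by
    apply Complex.Gamma_ne_zero
    intro m h
    exact hμ m (neg_inj.mp h)
  have hI := HermiteAux.main_int μ z ha
  have hS : (∑' n : ℕ, ((-1 : ℂ) ^ n / (n.factorial : ℂ)) *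
      Complex.Gamma (((n : ℂ) - μ) / 2) * (2 * z) ^ n) = ∑' n, HermiteAux.F μ z n := rfl
  rw [hS, hI, one_div, mul_inv]
  ring
end
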